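/- For every natural number n, ∑_{λ ∈ Λ₃(n)} X(ℓ(λ)) ≤ J(n), where the sum is over all partitions λ of n all of whose parts are at least 3, J(n) is the number of isomorphism classes of (not necessarily connected) simple graphs on n vertices in which every ∼-class has at least 3 vertices, and X(t) is the number of equivalence classes of t×t symmetric 0–1 matrices with pairwise distinct rows under simultaneous permutation of rows and columns. -/

import Mathlib

/-- x ∼ y iff the open neighborhoods coincide or the closed neighborhoods coincide. -/
def simRel {V : Type*} (G : SimpleGraph V) (x y : V) : Prop :=
  G.neighborSet x = G.neighborSet y ∨
    insert x (G.neighborSet x) = insert y (G.neighborSet y)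

/-- Graphs on `Fin n` satisfying a property `P`, up to isomorphism. -/
def graphClassSetoid (n : ℕ) (P : SimpleGraph (Fin n) → Prop) :
    Setoid {G : SimpleGraph (Fin n) // P G} where
  r G H := Nonempty (G.1 ≃g H.1)
  iseqv := ⟨fun _ => ⟨RelIso.refl _⟩, fun ⟨e⟩ => ⟨e.symm⟩, fun ⟨e⟩ ⟨f⟩ => ⟨e.trans f⟩⟩

/-- `J n`: the number of isomorphism classes of (not necessarily connected) graphs on `n`
vertices all of whose ∼-classes have at least three vertices. -/
noncomputable def JCount (n : ℕ) : ℕ :=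
  Nat.card (Quotient (graphClassSetoid n (fun G => ∀ x, 3 ≤ {y | simRel G x y}.ncard)))

/-- `t × t` symmetric 0–1 matrices with pairwise distinct rows. -/
def SymDistinctMat (t : ℕ) : Type :=
  {A : Matrix (Fin t) (Fin t) (Fin 2) // A.IsSymm ∧ ∀ i j : Fin t, i ≠ j → ∃ n, A i n ≠ A j n}

/-- Simultaneous permutation of rows and columns. -/
def matPermSetoid (t : ℕ) : Setoid (SymDistinctMat t) where
  r A B := ∃ σ : Equiv.Perm (Fin t), ∀ i j, B.1 i j = A.1 (σ i) (σ j)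
  iseqv := by
    refine ⟨fun A => ⟨Equiv.refl _, fun i j => rfl⟩, ?_, ?_⟩
    · rintro A B ⟨σ, h⟩
      exact ⟨σ.symm, fun i j => by rw [h]; simp⟩
    · rintro A B C ⟨σ, h⟩ ⟨τ, h'⟩
      exact ⟨τ.trans σ, fun i j => by rw [h', h]; rfl⟩

/-- `X t`: the number of `t × t` symmetric 0–1 matrices with pairwise distinct rows, up to
simultaneous permutation of rows and columns. -/
noncomputable def symDistinctCount (t : ℕ) : ℕ := Nat.card (Quotient (matPermSetoid t))

/-! ### Auxiliary material -/

section Aux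
open Finset

/-- The blowup graph of a symmetric 0-1 matrix along a coloring. -/
def blowup {n t : ℕ} (A : Matrix (Fin t) (Fin t) (Fin 2)) (hA : A.IsSymm)
    (c : Fin n → Fin t) : SimpleGraph (Fin n) where
  Adj x y := x ≠ y ∧ A (c x) (c y) = 1
  symm := by
    constructor
    rintro x y ⟨h1, h2⟩
    exact ⟨h1.symm, by rw [hA.apply]; exact h2⟩
  loopless := ⟨fun x h => h.1 rfl⟩

def fiber {n t : ℕ} (c : Fin n → Fin t) (i : Fin t) : Finset (Fin n) :=
  univ.filter (fun x => c x = i)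

lemma mem_fiber {n t : ℕ} {c : Fin n → Fin t} {i : Fin t} {x : Fin n} :
    x ∈ fiber c i ↔ c x = i := by simp [fiber]

lemma exists_ne_ne {n : ℕ} {F : Finset (Fin n)} (h : 3 ≤ F.card) (x y : Fin n) :
    ∃ z ∈ F, z ≠ x ∧ z ≠ y := by
  have hns : ¬ F ⊆ {x, y} := by
    intro hsub
    have h1 := Finset.card_le_card hsub
    have h2 : ({x, y} : Finset (Fin n)).card ≤ 2 := Finset.card_le_two
    omega
  obtain ⟨z, hz, hz2⟩ := Finset.not_subset.mp hns
  simp only [Finset.mem_insert, Finset.mem_singleton, not_or] at hz2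
  exact ⟨z, hz, hz2.1, hz2.2⟩

lemma fin2_cases (a : Fin 2) : a = 0 ∨ a = 1 := by omega

lemma fin2_ext {a b : Fin 2} (h : a = 1 ↔ b = 1) : a = b := by omega

lemma not_simRel_of {n t : ℕ} {A : Matrix (Fin t) (Fin t) (Fin 2)} {hA : A.IsSymm}
    {c : Fin n → Fin t} (h3 : ∀ i, 3 ≤ (fiber c i).card) {x y : Fin n} {k : Fin t}
    (h1 : A (c x) k = 1) (h2 : A (c y) k ≠ 1) :
    ¬ simRel (blowup A hA c) x y := by
  obtain ⟨z, hzf, hzx, hzy⟩ := exists_ne_ne (h3 k) x y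
  have hcz : c z = k := mem_fiber.mp hzf
  have hadjx : (blowup A hA c).Adj x z := ⟨hzx.symm, by rw [hcz]; exact h1⟩
  have hadjy : ¬ (blowup A hA c).Adj y z := fun h => h2 (by rw [← hcz]; exact h.2)
  rintro (h | h)
  · exact hadjy (by rw [← SimpleGraph.mem_neighborSet, ← h]; exact hadjx)
  · have hz' : z ∈ insert y ((blowup A hA c).neighborSet y) := by
      rw [← h]; exact Set.mem_insert_of_mem _ hadjx
    rcases hz' with h' | h'
    · exact hzy h'
    · exact hadjy h'

lemma simRel_blowup {n t : ℕ} {A : Matrix (Fin t) (Fin t) (Fin 2)} {hA : A.IsSymm}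
    {c : Fin n → Fin t} (hd : ∀ i j : Fin t, i ≠ j → ∃ k, A i k ≠ A j k)
    (h3 : ∀ i, 3 ≤ (fiber c i).card) (x y : Fin n) :
    simRel (blowup A hA c) x y ↔ c x = c y := by
  constructor
  · intro h
    by_contra hne
    obtain ⟨k, hk⟩ := hd _ _ hne
    rcases fin2_cases (A (c x) k) with h1 | h1 <;> rcases fin2_cases (A (c y) k) with h2 | h2
    · rw [h1, h2] at hk; exact hk rfl
    · exact not_simRel_of (hA := hA) h3 h2 (by rw [h1]; decide) (h.imp Eq.symm Eq.symm)
    · exact not_simRel_of (hA := hA) h3 h1 (by rw [h2]; decide) h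
    · rw [h1, h2] at hk; exact hk rfl
  · intro h
    rcases fin2_cases (A (c x) (c x)) with h0 | h0
    · left
      ext z
      simp only [SimpleGraph.mem_neighborSet]
      show (x ≠ z ∧ A (c x) (c z) = 1) ↔ (y ≠ z ∧ A (c y) (c z) = 1)
      rw [← h]
      constructor <;> rintro ⟨-, hP⟩ <;>
        refine ⟨fun e => ?_, hP⟩ <;> (subst e; first
          | (rw [h0] at hP; exact absurd hP (by decide))
          | (rw [← h, h0] at hP; exact absurd hP (by decide)))
    · right
      have key : ∀ w : Fin n, c w = c x →
          insert w ((blowup A hA c).neighborSet w) = {z | A (c x) (c z) = 1} := by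
        intro w hw
        ext z
        simp only [Set.mem_insert_iff, SimpleGraph.mem_neighborSet, Set.mem_setOf_eq]
        show z = w ∨ (w ≠ z ∧ A (c w) (c z) = 1) ↔ A (c x) (c z) = 1
        rw [hw]
        constructor
        · rintro (rfl | ⟨-, hP⟩)
          · rw [hw]; exact h0
          · exact hP
        · intro hP
          by_cases hzw : z = w
          · exact Or.inl hzw
          · exact Or.inr ⟨fun e => hzw e.symm, hP⟩
      rw [key x rfl, key y h.symm]

lemma simRel_iso {V W : Type*} {G : SimpleGraph V} {G' : SimpleGraph W} (φ : G ≃g G')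
    (x y : V) : simRel G x y ↔ simRel G' (φ x) (φ y) := by
  have him : ∀ v, G'.neighborSet (φ v) = φ '' G.neighborSet v := by
    intro v
    ext z
    simp only [SimpleGraph.mem_neighborSet, Set.mem_image]
    constructor
    · intro hz
      refine ⟨φ.symm z, ?_, φ.apply_symm_apply z⟩
      show G.Adj v (φ.symm z)
      rw [← φ.map_adj_iff, φ.apply_symm_apply]
      exact hz
    · rintro ⟨a, ha, rfl⟩
      exact φ.map_adj_iff.mpr ha
  have hinj : Function.Injective φ := φ.toEquiv.injective
  unfold simRel
  rw [him, him, ← Set.image_insert_eq, ← Set.image_insert_eq,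
    Set.image_eq_image hinj, Set.image_eq_image hinj]

lemma rigidity {n t t' : ℕ} {A : Matrix (Fin t) (Fin t) (Fin 2)}
    {A' : Matrix (Fin t') (Fin t') (Fin 2)} {hA : A.IsSymm} {hA' : A'.IsSymm}
    {c : Fin n → Fin t} {c' : Fin n → Fin t'}
    (hd : ∀ i j : Fin t, i ≠ j → ∃ k, A i k ≠ A j k)
    (hd' : ∀ i j : Fin t', i ≠ j → ∃ k, A' i k ≠ A' j k)
    (h3 : ∀ i, 3 ≤ (fiber c i).card) (h3' : ∀ i, 3 ≤ (fiber c' i).card)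
    (φ : blowup A hA c ≃g blowup A' hA' c') :
    ∃ σ : Fin t ≃ Fin t',
      (∀ i, (fiber c' (σ i)).card = (fiber c i).card) ∧
      (∀ i j, A' (σ i) (σ j) = A i j) := by
  have hcc : ∀ x y, c x = c y ↔ c' (φ x) = c' (φ y) := by
    intro x y
    rw [← simRel_blowup (hA := hA) hd h3, simRel_iso φ, simRel_blowup hd' h3']
  have hrep : ∀ i : Fin t, ∃ x, c x = i := by
    intro i
    obtain ⟨z, hz⟩ := Finset.card_pos.mp (lt_of_lt_of_le (by norm_num) (h3 i))
    exact ⟨z, mem_fiber.mp hz⟩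
  have hrep' : ∀ i : Fin t', ∃ x, c' x = i := by
    intro i
    obtain ⟨z, hz⟩ := Finset.card_pos.mp (lt_of_lt_of_le (by norm_num) (h3' i))
    exact ⟨z, mem_fiber.mp hz⟩
  classical
  set rep : Fin t → Fin n := fun i => (hrep i).choose with hrepdef
  have hrepc : ∀ i, c (rep i) = i := fun i => (hrep i).choose_spec
  set σ₀ : Fin t → Fin t' := fun i => c' (φ (rep i)) with hσ₀def
  have hσ : ∀ x, c' (φ x) = σ₀ (c x) := by
    intro x
    exact (hcc x (rep (c x))).mp (hrepc (c x)).symm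
  have hinj : Function.Injective σ₀ := by
    intro i j hij
    have := (hcc (rep i) (rep j)).mpr hij
    rw [hrepc, hrepc] at this
    exact this
  have hsurj : Function.Surjective σ₀ := by
    intro j'
    obtain ⟨w, hw⟩ := hrep' j'
    refine ⟨c (φ.symm w), ?_⟩
    rw [← hσ (φ.symm w)]
    simp [hw]
  refine ⟨Equiv.ofBijective σ₀ ⟨hinj, hsurj⟩, ?_, ?_⟩
  · intro i
    have himg : fiber c' (σ₀ i) = (fiber c i).image φ := by
      ext z
      simp only [mem_fiber, Finset.mem_image]
      constructor
      · intro hz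
        refine ⟨φ.symm z, ?_, by simp⟩
        have h1 : c' (φ (φ.symm z)) = σ₀ (c (φ.symm z)) := hσ _
        simp only [RelIso.apply_symm_apply] at h1
        apply hinj
        rw [← h1, hz]
      · rintro ⟨a, ha, rfl⟩
        rw [hσ a, ha]
    show (fiber c' (σ₀ i)).card = (fiber c i).card
    rw [himg]
    exact Finset.card_image_of_injective _ φ.toEquiv.injective
  · intro i j
    have huv : ∃ u v : Fin n, u ≠ v ∧ c u = i ∧ c v = j := by
      by_cases hij : i = j
      · subst hij
        obtain ⟨z, hz, hz1, -⟩ := exists_ne_ne (h3 i) (rep i) (rep i)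
        exact ⟨rep i, z, fun e => hz1 e.symm, hrepc i, mem_fiber.mp hz⟩
      · refine ⟨rep i, rep j, ?_, hrepc i, hrepc j⟩
        intro e
        exact hij (by rw [← hrepc i, e, hrepc j])
    obtain ⟨u, v, huv, hu, hv⟩ := huv
    have h1 : A i j = 1 ↔ (blowup A hA c).Adj u v := by
      constructor
      · intro h; exact ⟨huv, by rw [hu, hv]; exact h⟩
      · intro h; rw [← hu, ← hv]; exact h.2
    have h2 : (blowup A hA c).Adj u v ↔ (blowup A' hA' c').Adj (φ u) (φ v) :=
      φ.map_adj_iff.symm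
    have h3'' : (blowup A' hA' c').Adj (φ u) (φ v) ↔ A' (σ₀ i) (σ₀ j) = 1 := by
      constructor
      · intro h
        have := h.2
        rwa [hσ u, hσ v, hu, hv] at this
      · intro h
        refine ⟨fun e => huv (φ.toEquiv.injective e), ?_⟩
        rw [hσ u, hσ v, hu, hv]
        exact h
    exact fin2_ext ((h1.trans (h2.trans h3'')).symm)

def fiberEquiv {t : ℕ} (g : Fin t → ℕ) (i₀ : Fin t) :
    {v : Σ j : Fin t, Fin (g j) // v.1 = i₀} ≃ Fin (g i₀) where
  toFun v := Fin.cast (congrArg g v.2) v.1.2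
  invFun a := ⟨⟨i₀, a⟩, rfl⟩
  left_inv := by rintro ⟨⟨j, a⟩, rfl⟩; rfl
  right_inv := fun a => rfl

variable {n : ℕ}

lemma card_sigma_parts (p : Nat.Partition n) :
    Fintype.card (Σ i : Fin p.parts.toList.length, Fin (p.parts.toList.get i)) = n := by
  rw [Fintype.card_sigma]
  simp only [Fintype.card_fin]
  have h1 : ∑ i : Fin p.parts.toList.length, p.parts.toList.get i = p.parts.toList.sum := by
    simpa using Fin.sum_univ_get p.parts.toList
  rw [h1, Multiset.sum_toList, p.parts_sum]

noncomputable def pEquiv (p : Nat.Partition n) :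
    Fin n ≃ Σ i : Fin p.parts.toList.length, Fin (p.parts.toList.get i) :=
  Fintype.equivOfCardEq (by rw [Fintype.card_fin, card_sigma_parts])

noncomputable def coloring (p : Nat.Partition n) : Fin n → Fin p.parts.card :=
  fun x => finCongr (Multiset.length_toList p.parts) ((pEquiv p x).1)

lemma card_fiber_coloring (p : Nat.Partition n) (i : Fin p.parts.card) :
    (fiber (coloring p) i).card =
      p.parts.toList.get ((finCongr (Multiset.length_toList p.parts)).symm i) := by
  classical
  rw [show (fiber (coloring p) i).card = Fintype.card {x : Fin n // coloring p x = i} from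
    (Fintype.card_subtype _).symm]
  have e1 : {x : Fin n // coloring p x = i} ≃
      {v : Σ j : Fin p.parts.toList.length, Fin (p.parts.toList.get j) //
        finCongr (Multiset.length_toList p.parts) v.1 = i} :=
    (pEquiv p).subtypeEquiv (fun x => Iff.rfl)
  have e2 := e1.trans ((Equiv.subtypeEquivRight (fun v => by
      exact (Equiv.apply_eq_iff_eq_symm_apply _))).trans
    (fiberEquiv (fun j => p.parts.toList.get j)
      ((finCongr (Multiset.length_toList p.parts)).symm i)))
  rw [Fintype.card_congr e2, Fintype.card_fin]

lemma parts_eq_map_fiber (p : Nat.Partition n) :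
    Multiset.map (fun i => (fiber (coloring p) i).card) Finset.univ.val = p.parts := by
  have hcongr : Multiset.map (fun i => (fiber (coloring p) i).card) Finset.univ.val =
      Multiset.map ((fun j => p.parts.toList.get j) ∘
        (finCongr (Multiset.length_toList p.parts)).symm) Finset.univ.val :=
    Multiset.map_congr rfl (fun i _ => card_fiber_coloring p i)
  rw [hcongr, ← Multiset.map_map]
  have huniv : Finset.univ.val.map ⇑(finCongr (Multiset.length_toList p.parts)).symm =
      (Finset.univ : Finset (Fin p.parts.toList.length)).val := by
    have := Finset.map_univ_equiv (finCongr (Multiset.length_toList p.parts)).symm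
    calc Finset.univ.val.map ⇑(finCongr (Multiset.length_toList p.parts)).symm
        = (Finset.univ.map (finCongr (Multiset.length_toList p.parts)).symm.toEmbedding).val :=
          rfl
      _ = _ := by rw [this]
  rw [huniv]
  have hval : (Finset.univ : Finset (Fin p.parts.toList.length)).val =
      ↑(List.finRange p.parts.toList.length) := by
    rw [Fin.univ_def]
  rw [hval]
  rw [Multiset.map_coe, List.map_get_finRange, Multiset.coe_toList]

lemma three_le_card_fiber (p : Nat.Partition n) (hp : ∀ i ∈ p.parts, 3 ≤ i)
    (i : Fin p.parts.card) : 3 ≤ (fiber (coloring p) i).card := by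
  apply hp
  have hm := Multiset.mem_map_of_mem (fun i => (fiber (coloring p) i).card)
    (Finset.mem_univ_val i)
  rwa [parts_eq_map_fiber] at hm

/-- A multiset-reindexing helper. -/
lemma map_univ_val_equiv {t t' : ℕ} (σ : Fin t ≃ Fin t') (g : Fin t' → ℕ) :
    Multiset.map (g ∘ σ) (Finset.univ : Finset (Fin t)).val =
      Multiset.map g (Finset.univ : Finset (Fin t')).val := by
  rw [← Multiset.map_map]
  congr 1
  calc (Finset.univ : Finset (Fin t)).val.map ⇑σ
      = (Finset.univ.map σ.toEmbedding).val := rfl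
    _ = (Finset.univ : Finset (Fin t')).val := by rw [Finset.map_univ_equiv]

end Aux

/-- `∑_{λ ∈ Λ₃(n)} X(ℓ(λ)) ≤ J(n)`. -/
theorem sum_symDistinctCount_le_JCount (n : ℕ) :
    ∑ p ∈ Finset.univ.filter (fun p : Nat.Partition n => ∀ i ∈ p.parts, 3 ≤ i),
        symDistinctCount p.parts.card ≤ JCount n := by
  classical
  set P : SimpleGraph (Fin n) → Prop := fun G => ∀ x, 3 ≤ {y | simRel G x y}.ncard with hPdef
  set S := Finset.univ.filter (fun p : Nat.Partition n => ∀ i ∈ p.parts, 3 ≤ i) with hSdef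
  haveI hfinM : ∀ m, Finite (SymDistinctMat m) := fun m => by
    unfold SymDistinctMat; infer_instance
  have hmem : ∀ p : ↥S, ∀ i ∈ (p : Nat.Partition n).parts, 3 ≤ i := by
    intro p
    exact (Finset.mem_filter.mp p.2).2
  have h3 : ∀ (p : ↥S) (i : Fin (p : Nat.Partition n).parts.card),
      3 ≤ (fiber (coloring (p : Nat.Partition n)) i).card :=
    fun p => three_le_card_fiber _ (hmem p)
  let bl : ∀ p : ↥S, Quotient (matPermSetoid (p : Nat.Partition n).parts.card) →
      SimpleGraph (Fin n) :=
    fun p q => blowup q.out.1 q.out.2.1 (coloring (p : Nat.Partition n))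
  have hbl : ∀ p q, P (bl p q) := by
    intro p q x
    have heq : {y | simRel (bl p q) x y} =
        ↑(fiber (coloring (p : Nat.Partition n)) (coloring (p : Nat.Partition n) x)) := by
      ext y
      simp only [Set.mem_setOf_eq, Finset.coe_filter, fiber, Finset.mem_univ, true_and,
        Finset.mem_coe, mem_fiber]
      rw [simRel_blowup q.out.2.2 (h3 p)]
      exact eq_comm
    rw [heq, Set.ncard_coe_finset]
    exact h3 p _
  let f : (Σ p : ↥S, Quotient (matPermSetoid (p : Nat.Partition n).parts.card)) →
      Quotient (graphClassSetoid n P) :=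
    fun x => ⟦⟨bl x.1 x.2, hbl x.1 x.2⟩⟧
  have hfinj : Function.Injective f := by
    rintro ⟨p, q⟩ ⟨p', q'⟩ hpq
    have hiso : Nonempty (bl p q ≃g bl p' q') := Quotient.exact hpq
    obtain ⟨φ⟩ := hiso
    obtain ⟨σ, hσcard, hσA⟩ := rigidity q.out.2.2 q'.out.2.2 (h3 p) (h3 p') φ
    have hparts : (p : Nat.Partition n).parts = (p' : Nat.Partition n).parts := by
      rw [← parts_eq_map_fiber (p : Nat.Partition n),
        ← parts_eq_map_fiber (p' : Nat.Partition n)]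
      calc Multiset.map (fun i => (fiber (coloring (p : Nat.Partition n)) i).card)
            Finset.univ.val
          = Multiset.map ((fun j => (fiber (coloring (p' : Nat.Partition n)) j).card) ∘ σ)
            Finset.univ.val :=
            Multiset.map_congr rfl (fun i _ => (hσcard i).symm)
        _ = _ := map_univ_val_equiv σ _
    have hpp : p = p' := Subtype.ext (Nat.Partition.ext hparts)
    subst hpp
    have hq : q = q' := by
      rw [← Quotient.out_equiv_out]
      refine ⟨(σ.symm : Equiv.Perm (Fin (p : Nat.Partition n).parts.card)), ?_⟩
      intro i j
      have := hσA (σ.symm i) (σ.symm j)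
      rw [σ.apply_symm_apply, σ.apply_symm_apply] at this
      exact this
    rw [hq]
  calc ∑ p ∈ S, symDistinctCount p.parts.card
      = ∑ p : ↥S, symDistinctCount (p : Nat.Partition n).parts.card :=
        (Finset.sum_coe_sort S _).symm
    _ = Nat.card (Σ p : ↥S, Quotient (matPermSetoid (p : Nat.Partition n).parts.card)) := by
        letI : ∀ p : ↥S, Fintype (Quotient (matPermSetoid (p : Nat.Partition n).parts.card)) :=
          fun p => Fintype.ofFinite _
        rw [Nat.card_eq_fintype_card, Fintype.card_sigma]
        exact Finset.sum_congr rfl (fun p _ => by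
          rw [symDistinctCount, Nat.card_eq_fintype_card])
    _ ≤ Nat.card (Quotient (graphClassSetoid n P)) :=
        Nat.card_le_card_of_injective f hfinj
    _ = JCount n := rfl
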